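/- arXiv:cs/9905010 — 3 statements merged into one kernel-verified Lean document; each statement's English description precedes it below -/
import Mathlib

section
/- Under the stated setup, for every λ ∈ ℝ^n with Z_λ finite and every γ ∈ ℝ^n with Z_{γ+λ} finite, the auxiliary function is a lower bound on the incomplete-data log-likelihood difference: A(γ, λ) ≤ L(γ + λ) − L(λ). -/
/- Common setup: log-linear models over proof trees (complete data X) and
   queries (incomplete data Y). -/

variable {X Y : Type*}

/-- `ν_#(x) = ∑ i, ν_i(x)`. -/
def nuSharp {n : ℕ} (ν : Fin n → X → ℕ) (x : X) : ℕ := ∑ i, ν i x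

/-- weighted property sum `λ·ν(x)`. -/
noncomputable def wdot {n : ℕ} (l : Fin n → ℝ) (ν : Fin n → X → ℕ) (x : X) : ℝ :=
  ∑ i, l i * (ν i x : ℝ)

/-- normalizing constant `Z_λ`. -/
noncomputable def Zpart (p0 : X → ℝ) {n : ℕ} (ν : Fin n → X → ℕ) (l : Fin n → ℝ) : ℝ :=
  ∑' x : X, Real.exp (wdot l ν x) * p0 x

/-- log-linear distribution `p_λ(x)`. -/
noncomputable def pLL (p0 : X → ℝ) {n : ℕ} (ν : Fin n → X → ℕ) (l : Fin n → ℝ) (x : X) : ℝ :=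
  (Zpart p0 ν l)⁻¹ * Real.exp (wdot l ν x) * p0 x

/-- incomplete-data probability `p_λ(y) = ∑_{x ∈ X(y)} p_λ(x)`. -/
noncomputable def pLLY (Yf : X → Y) (p0 : X → ℝ) {n : ℕ} (ν : Fin n → X → ℕ)
    (l : Fin n → ℝ) (y : Y) : ℝ :=
  ∑' x : {x : X // Yf x = y}, pLL p0 ν l x.1

/-- incomplete-data log-likelihood `L(λ) = ∑_{y ∈ 𝒴} ln p_λ(y)`. -/
noncomputable def LL (Yf : X → Y) (p0 : X → ℝ) {n : ℕ} (ν : Fin n → X → ℕ)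
    (𝒴 : Multiset Y) (l : Fin n → ℝ) : ℝ :=
  (𝒴.map fun y => Real.log (pLLY Yf p0 ν l y)).sum

/-- expectation `p_λ[f]`. -/
noncomputable def pExp (p0 : X → ℝ) {n : ℕ} (ν : Fin n → X → ℕ) (l : Fin n → ℝ)
    (f : X → ℝ) : ℝ :=
  ∑' x : X, pLL p0 ν l x * f x

/-- conditional expectation `k_λ[f]` given observed `y`. -/
noncomputable def kExp (Yf : X → Y) (p0 : X → ℝ) {n : ℕ} (ν : Fin n → X → ℕ)
    (l : Fin n → ℝ) (y : Y) (f : X → ℝ) : ℝ :=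
  ∑' x : {x : X // Yf x = y}, (pLL p0 ν l x.1 / pLLY Yf p0 ν l y) * f x.1

/-- auxiliary function
`A(γ,λ) = ∑_{y∈𝒴} (1 + k_λ[γ·ν] − p_λ[∑ i, ν̄_i e^{γ_i ν_#}])`. -/
noncomputable def Aaux (Yf : X → Y) (p0 : X → ℝ) {n : ℕ} (ν : Fin n → X → ℕ)
    (𝒴 : Multiset Y) (γ l : Fin n → ℝ) : ℝ :=
  (𝒴.map fun y =>
    1 + kExp Yf p0 ν l y (fun x => wdot γ ν x)
      - pExp p0 ν l (fun x =>
          ∑ i, ((ν i x : ℝ) / (nuSharp ν x : ℝ)) * Real.exp (γ i * (nuSharp ν x : ℝ)))).sum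

/- ### Auxiliary lemmas -/

lemma wdot_add' {n : ℕ} (γ l : Fin n → ℝ) (ν : Fin n → X → ℕ) (x : X) :
    wdot (γ + l) ν x = wdot γ ν x + wdot l ν x := by
  simp [wdot, add_mul, Finset.sum_add_distrib]

/-- Jensen's inequality for exp with weights `ν i x / ν_#(x)`. -/
lemma exp_wdot_le {n : ℕ} (γ : Fin n → ℝ) (ν : Fin n → X → ℕ) (x : X)
    (hν : 1 ≤ nuSharp ν x) :
    Real.exp (wdot γ ν x) ≤
      ∑ i, ((ν i x : ℝ) / (nuSharp ν x : ℝ)) * Real.exp (γ i * (nuSharp ν x : ℝ)) := by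
  have hm : (0:ℝ) < (nuSharp ν x : ℝ) := by exact_mod_cast hν
  have h₁ : ∑ i, ((ν i x : ℝ) / (nuSharp ν x : ℝ)) = 1 := by
    rw [← Finset.sum_div, div_eq_one_iff_eq hm.ne']
    push_cast [nuSharp]
    rfl
  have h := convexOn_exp.map_sum_le (t := Finset.univ)
      (w := fun i => (ν i x : ℝ) / (nuSharp ν x : ℝ))
      (p := fun i => γ i * (nuSharp ν x : ℝ))
      (fun i _ => by positivity) h₁ (fun i _ => Set.mem_univ _)
  have hsum : wdot γ ν x
      = ∑ i, ((ν i x : ℝ) / (nuSharp ν x : ℝ)) * (γ i * (nuSharp ν x : ℝ)) := by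
    unfold wdot
    refine Finset.sum_congr rfl fun i _ => ?_
    field_simp
  rw [hsum]
  simpa [smul_eq_mul] using h

lemma msum_map_sub (s : Multiset Y) (f g : Y → ℝ) :
    (s.map fun y => f y - g y).sum = (s.map f).sum - (s.map g).sum := by
  induction s using Multiset.induction_on with
  | empty => simp
  | cons a s ih => simp only [Multiset.map_cons, Multiset.sum_cons, ih]; ring

lemma msum_map_le (s : Multiset Y) (f g : Y → ℝ) (h : ∀ y ∈ s, f y ≤ g y) :
    (s.map f).sum ≤ (s.map g).sum := by
  induction s using Multiset.induction_on with
  | empty => simp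
  | cons a s ih =>
      simp only [Multiset.map_cons, Multiset.sum_cons]
      exact add_le_add (h a (Multiset.mem_cons_self a s))
        (ih fun y hy => h y (Multiset.mem_cons_of_mem hy))

/-- Lemma 1: `A(γ,λ) ≤ L(γ+λ) − L(λ)`. -/
theorem auxiliary_lower_bound
    {X Y : Type*} [Countable X] (Yf : X → Y)
    (p0 : X → ℝ) (hp0 : ∀ x, 0 < p0 x) (hp0sum : ∑' x : X, p0 x = 1)
    {n : ℕ} (ν : Fin n → X → ℕ) (hν : ∀ x, 1 ≤ nuSharp ν x)
    (𝒴 : Multiset Y) (l γ : Fin n → ℝ)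
    (hZl : Summable fun x : X => Real.exp (wdot l ν x) * p0 x)
    (hZgl : Summable fun x : X => Real.exp (wdot (γ + l) ν x) * p0 x)
    (hpos : ∀ y ∈ 𝒴, 0 < pLLY Yf p0 ν l y)
    (hksum : ∀ y ∈ 𝒴, Summable fun x : {x : X // Yf x = y} =>
      (pLL p0 ν l x.1 / pLLY Yf p0 ν l y) * wdot γ ν x.1)
    (hpsum : Summable fun x : X => pLL p0 ν l x *
      ∑ i, ((ν i x : ℝ) / (nuSharp ν x : ℝ)) * Real.exp (γ i * (nuSharp ν x : ℝ))) :
    Aaux Yf p0 ν 𝒴 γ l ≤ LL Yf p0 ν 𝒴 (γ + l) - LL Yf p0 ν 𝒴 l := by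
  set Zl := Zpart p0 ν l with hZldef
  set Zgl := Zpart p0 ν (γ + l) with hZgldef
  have hZl0 : 0 ≤ Zl := tsum_nonneg fun x => mul_nonneg (Real.exp_pos _).le (hp0 x).le
  have hZgl0 : 0 ≤ Zgl := tsum_nonneg fun x => mul_nonneg (Real.exp_pos _).le (hp0 x).le
  clear_value Zl Zgl
  -- pointwise key identity
  have hkey : ∀ x : X, pLL p0 ν l x * Real.exp (wdot γ ν x)
      = Zl⁻¹ * (Real.exp (wdot (γ + l) ν x) * p0 x) := by
    intro x
    rw [pLL, ← hZldef, wdot_add', Real.exp_add]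
    ring
  have hqe_summable : Summable fun x : X => pLL p0 ν l x * Real.exp (wdot γ ν x) := by
    refine (hZgl.mul_left Zl⁻¹).congr fun x => (hkey x).symm
  have hqe_tsum : ∑' x : X, pLL p0 ν l x * Real.exp (wdot γ ν x) = Zl⁻¹ * Zgl := by
    calc ∑' x : X, pLL p0 ν l x * Real.exp (wdot γ ν x)
        = ∑' x : X, Zl⁻¹ * (Real.exp (wdot (γ + l) ν x) * p0 x) := tsum_congr hkey
      _ = Zl⁻¹ * Zgl := by rw [tsum_mul_left, hZgldef, Zpart]
  have hpl : Summable (pLL p0 ν l) := by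
    refine (hZl.mul_left Zl⁻¹).congr fun x => ?_
    rw [pLL, ← hZldef]
    ring
  have hpl0 : ∀ x, 0 ≤ pLL p0 ν l x := fun x => by
    have h1 : (0:ℝ) ≤ (Zpart p0 ν l)⁻¹ := inv_nonneg.mpr (hZldef ▸ hZl0)
    rw [pLL]
    exact mul_nonneg (mul_nonneg h1 (Real.exp_pos _).le) (hp0 x).le
  rw [LL, LL, ← msum_map_sub, Aaux]
  refine msum_map_le _ _ _ fun y hy => ?_
  -- per-element inequality
  set Py := pLLY Yf p0 ν l y with hPydef
  set Qy := pLLY Yf p0 ν (γ + l) y with hQydef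
  have hPy : 0 < Py := hPydef ▸ hpos y hy
  have hks : Summable fun x : {x : X // Yf x = y} =>
      pLL p0 ν l x.1 / Py * wdot γ ν x.1 := by
    have := hksum y hy
    rwa [← hPydef] at this
  have hkExp_eq : kExp Yf p0 ν l y (fun x => wdot γ ν x)
      = ∑' x : {x : X // Yf x = y}, pLL p0 ν l x.1 / Py * wdot γ ν x.1 := by
    rw [kExp, ← hPydef]
  have hQy_eq : Qy = Zgl⁻¹ * ∑' x : {x : X // Yf x = y},
      Real.exp (wdot (γ + l) ν x.1) * p0 x.1 := by
    rw [hQydef, pLLY, ← tsum_mul_left]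
    exact tsum_congr fun x => by rw [pLL, ← hZgldef]; ring
  clear_value Py Qy
  -- the fiber is nonempty
  have hne : Nonempty {x : X // Yf x = y} := by
    by_contra h
    rw [not_nonempty_iff] at h
    have : Py = 0 := by rw [hPydef, pLLY, tsum_empty]
    exact hPy.ne' this
  obtain ⟨x₀⟩ := hne
  -- positivity of partition functions
  have hZlpos : 0 < Zl := by
    rcases hZl0.lt_or_eq with h | h
    · exact h
    · exfalso
      have : Py = 0 := by
        rw [hPydef, pLLY]
        have hz : ∀ x : {x : X // Yf x = y}, pLL p0 ν l x.1 = 0 := fun x => by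
          rw [pLL, ← hZldef, ← h, inv_zero, zero_mul, zero_mul]
        simp [hz]
      exact hPy.ne' this
  have hZglpos : 0 < Zgl := by
    have h1 : Real.exp (wdot (γ + l) ν x₀.1) * p0 x₀.1 ≤ Zpart p0 ν (γ + l) :=
      Summable.le_tsum hZgl x₀.1 fun j _ => mul_nonneg (Real.exp_pos _).le (hp0 j).le
    have h2 : 0 < Real.exp (wdot (γ + l) ν x₀.1) * p0 x₀.1 :=
      mul_pos (Real.exp_pos _) (hp0 _)
    rw [hZgldef]
    linarith
  -- fiber sums
  have hZgl' : Summable fun x : {x : X // Yf x = y} =>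
      Real.exp (wdot (γ + l) ν x.1) * p0 x.1 :=
    hZgl.comp_injective Subtype.coe_injective
  have hpl' : Summable fun x : {x : X // Yf x = y} => pLL p0 ν l x.1 :=
    hpl.comp_injective Subtype.coe_injective
  have hqe' : Summable fun x : {x : X // Yf x = y} =>
      pLL p0 ν l x.1 * Real.exp (wdot γ ν x.1) :=
    hqe_summable.comp_injective Subtype.coe_injective
  have hQypos : 0 < Qy := by
    rw [hQy_eq]
    have h1 : Real.exp (wdot (γ + l) ν x₀.1) * p0 x₀.1
        ≤ ∑' x : {x : X // Yf x = y}, Real.exp (wdot (γ + l) ν x.1) * p0 x.1 :=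
      Summable.le_tsum hZgl' x₀ fun j _ => mul_nonneg (Real.exp_pos _).le (hp0 _).le
    have h2 : 0 < Real.exp (wdot (γ + l) ν x₀.1) * p0 x₀.1 :=
      mul_pos (Real.exp_pos _) (hp0 _)
    exact mul_pos (inv_pos.mpr hZglpos) (lt_of_lt_of_le h2 h1)
  have hfib_tsum : ∑' x : {x : X // Yf x = y}, Real.exp (wdot (γ + l) ν x.1) * p0 x.1
      = Zgl * Qy := by
    rw [hQy_eq, ← mul_assoc, mul_inv_cancel₀ hZglpos.ne', one_mul]
  -- conditional distribution facts
  have hqsum : Summable fun x : {x : X // Yf x = y} => pLL p0 ν l x.1 / Py :=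
    hpl'.div_const Py
  have hq1 : ∑' x : {x : X // Yf x = y}, pLL p0 ν l x.1 / Py = 1 := by
    have hsum : ∑' x : {x : X // Yf x = y}, pLL p0 ν l x.1 = Py := by
      rw [hPydef, pLLY]
    rw [tsum_div_const, hsum]
    exact div_self hPy.ne'
  -- T = expected exp(g) under the conditional distribution
  obtain ⟨T, hTdef⟩ : ∃ t : ℝ, t = Zl⁻¹ * Zgl * Qy / Py := ⟨_, rfl⟩
  have hTpos : 0 < T := by
    rw [hTdef]
    exact div_pos (mul_pos (mul_pos (inv_pos.mpr hZlpos) hZglpos) hQypos) hPy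
  have hT_eq : ∑' x : {x : X // Yf x = y},
      pLL p0 ν l x.1 / Py * Real.exp (wdot γ ν x.1) = T := by
    have hc : ∀ x : {x : X // Yf x = y}, pLL p0 ν l x.1 / Py * Real.exp (wdot γ ν x.1)
        = (Real.exp (wdot (γ + l) ν x.1) * p0 x.1) * (Zl⁻¹ / Py) := by
      intro x
      rw [div_mul_eq_mul_div, hkey x.1]
      ring
    rw [tsum_congr hc, Summable.tsum_mul_right _ hZgl', hfib_tsum, hTdef]
    ring
  have hTsum : Summable fun x : {x : X // Yf x = y} =>
      pLL p0 ν l x.1 / Py * Real.exp (wdot γ ν x.1) :=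
    (hqe'.div_const Py).congr fun x => by ring
  -- Gibbs inequality : kExp ≤ log T
  have hgibbs : kExp Yf p0 ν l y (fun x => wdot γ ν x) ≤ Real.log T := by
    have hsub1 : Summable fun x : {x : X // Yf x = y} =>
        pLL p0 ν l x.1 / Py * wdot γ ν x.1 - pLL p0 ν l x.1 / Py * Real.log T :=
      hks.sub (hqsum.mul_right _)
    have hsub2 : Summable fun x : {x : X // Yf x = y} =>
        pLL p0 ν l x.1 / Py * Real.exp (wdot γ ν x.1) / T - pLL p0 ν l x.1 / Py :=
      (hTsum.div_const T).sub hqsum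
    have hpt : ∀ x : {x : X // Yf x = y},
        pLL p0 ν l x.1 / Py * wdot γ ν x.1 - pLL p0 ν l x.1 / Py * Real.log T
          ≤ pLL p0 ν l x.1 / Py * Real.exp (wdot γ ν x.1) / T - pLL p0 ν l x.1 / Py := by
      intro x
      have hq0 : 0 ≤ pLL p0 ν l x.1 / Py := div_nonneg (hpl0 x.1) hPy.le
      have hlog : wdot γ ν x.1 - Real.log T ≤ Real.exp (wdot γ ν x.1) / T - 1 := by
        have h1 : Real.log (Real.exp (wdot γ ν x.1) / T)
            ≤ Real.exp (wdot γ ν x.1) / T - 1 :=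
          Real.log_le_sub_one_of_pos (div_pos (Real.exp_pos _) hTpos)
        rwa [Real.log_div (Real.exp_pos _).ne' hTpos.ne', Real.log_exp] at h1
      have h2 := mul_le_mul_of_nonneg_left hlog hq0
      calc pLL p0 ν l x.1 / Py * wdot γ ν x.1 - pLL p0 ν l x.1 / Py * Real.log T
          = pLL p0 ν l x.1 / Py * (wdot γ ν x.1 - Real.log T) := by ring
        _ ≤ pLL p0 ν l x.1 / Py * (Real.exp (wdot γ ν x.1) / T - 1) := h2
        _ = pLL p0 ν l x.1 / Py * Real.exp (wdot γ ν x.1) / T - pLL p0 ν l x.1 / Py := by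
            ring
    have hmain := Summable.tsum_le_tsum hpt hsub1 hsub2
    have hleft : ∑' x : {x : X // Yf x = y},
        (pLL p0 ν l x.1 / Py * wdot γ ν x.1 - pLL p0 ν l x.1 / Py * Real.log T)
        = kExp Yf p0 ν l y (fun x => wdot γ ν x) - Real.log T := by
      rw [Summable.tsum_sub hks (hqsum.mul_right _), Summable.tsum_mul_right _ hqsum, hq1,
        one_mul, hkExp_eq]
    have hright : ∑' x : {x : X // Yf x = y},
        (pLL p0 ν l x.1 / Py * Real.exp (wdot γ ν x.1) / T - pLL p0 ν l x.1 / Py) = 0 := by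
      rw [Summable.tsum_sub (hTsum.div_const T) hqsum, tsum_div_const, hT_eq, hq1,
        div_self hTpos.ne']
      ring
    rw [hleft, hright] at hmain
    linarith
  -- Claim 2 : 1 - pExp ≤ log Zl - log Zgl
  have hclaim2 : 1 - pExp p0 ν l (fun x =>
      ∑ i, ((ν i x : ℝ) / (nuSharp ν x : ℝ)) * Real.exp (γ i * (nuSharp ν x : ℝ)))
      ≤ Real.log Zl - Real.log Zgl := by
    have hptwise : ∀ x : X, pLL p0 ν l x * Real.exp (wdot γ ν x)
        ≤ pLL p0 ν l x *
          ∑ i, ((ν i x : ℝ) / (nuSharp ν x : ℝ)) * Real.exp (γ i * (nuSharp ν x : ℝ)) :=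
      fun x => mul_le_mul_of_nonneg_left (exp_wdot_le γ ν x (hν x)) (hpl0 x)
    have h1 : Zl⁻¹ * Zgl ≤ pExp p0 ν l (fun x =>
        ∑ i, ((ν i x : ℝ) / (nuSharp ν x : ℝ)) * Real.exp (γ i * (nuSharp ν x : ℝ))) := by
      rw [← hqe_tsum, pExp]
      exact Summable.tsum_le_tsum hptwise hqe_summable hpsum
    have h2 : Real.log (Zgl / Zl) ≤ Zgl / Zl - 1 :=
      Real.log_le_sub_one_of_pos (div_pos hZglpos hZlpos)
    rw [Real.log_div hZglpos.ne' hZlpos.ne'] at h2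
    have h3 : Zgl / Zl = Zl⁻¹ * Zgl := by ring
    rw [h3] at h2
    linarith
  -- Combine
  have hlogT : Real.log T = Real.log Zgl - Real.log Zl + Real.log Qy - Real.log Py := by
    rw [hTdef, Real.log_div (mul_pos (mul_pos (inv_pos.mpr hZlpos) hZglpos) hQypos).ne'
        hPy.ne',
      Real.log_mul (mul_pos (inv_pos.mpr hZlpos) hZglpos).ne' hQypos.ne',
      Real.log_mul (inv_pos.mpr hZlpos).ne' hZglpos.ne', Real.log_inv]
    ring
  rw [hlogT] at hgibbs
  linarith
end

section
/- Under the stated setup, let λ ∈ ℝ^n with Z_λ finite, and suppose γ̂ ∈ ℝ^n is a global maximizer of γ ↦ A(γ, λ) with Z_{γ̂+λ} finite. Then one step of iterative maximization does not decrease the incomplete-data log-likelihood: L(γ̂ + λ) ≥ L(λ). -/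
/- Common setup: log-linear models over proof trees (complete data X) and
   queries (incomplete data Y). -/

variable {X Y : Type*}

/-- Gibbs' inequality / Jensen for log over countable sums. -/
lemma gibbs_aux {ι : Type*} (w r : ι → ℝ) (hw : ∀ i, 0 < w i) (hr : ∀ i, 0 < r i)
    (hwsum : Summable w) (hw1 : ∑' i, w i = 1)
    (hwr : Summable fun i => w i * r i)
    (hwlr : Summable fun i => w i * Real.log (r i)) :
    ∑' i, w i * Real.log (r i) ≤ Real.log (∑' i, w i * r i) := by
  have hne : Nonempty ι := by
    by_contra h
    rw [not_nonempty_iff] at h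
    rw [tsum_empty] at hw1; norm_num at hw1
  obtain ⟨i0⟩ := hne
  set s := ∑' i, w i * r i with hs
  have hspos : 0 < s :=
    Summable.tsum_pos hwr (fun i => (mul_pos (hw i) (hr i)).le) i0 (mul_pos (hw i0) (hr i0))
  have hterm : ∀ i, w i * Real.log (r i) ≤ w i * Real.log s + (w i * r i) / s - w i := by
    intro i
    have h1 : Real.log (r i / s) ≤ r i / s - 1 :=
      Real.log_le_sub_one_of_pos (div_pos (hr i) hspos)
    have h2 : Real.log (r i) - Real.log s ≤ r i / s - 1 := by
      rwa [Real.log_div (hr i).ne' hspos.ne'] at h1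
    have h3 : w i * (Real.log (r i) - Real.log s) ≤ w i * (r i / s - 1) :=
      mul_le_mul_of_nonneg_left h2 (hw i).le
    have h4 : w i * (r i / s) = (w i * r i) / s := by ring
    nlinarith [h3, h4]
  have hA : Summable fun i => w i * Real.log s := hwsum.mul_right _
  have hB : Summable fun i => (w i * r i) / s := hwr.div_const s
  calc ∑' i, w i * Real.log (r i)
      ≤ ∑' i, (w i * Real.log s + (w i * r i) / s - w i) := Summable.tsum_le_tsum hterm hwlr ((hA.add hB).sub hwsum)
    _ = Real.log s := by
        rw [Summable.tsum_sub (hA.add hB) hwsum, Summable.tsum_add hA hB, tsum_mul_right, tsum_div_const,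
          hw1, ← hs]
        field_simp
        ring

/-- Monotonicity of one IM step: if `γ̂` globally maximizes `A(·,λ)` then
`L(γ̂+λ) ≥ L(λ)`. -/
theorem im_step_monotone
    {X Y : Type*} [Countable X] (Yf : X → Y)
    (p0 : X → ℝ) (hp0 : ∀ x, 0 < p0 x) (hp0sum : ∑' x : X, p0 x = 1)
    {n : ℕ} (ν : Fin n → X → ℕ) (hν : ∀ x, 1 ≤ nuSharp ν x)
    (𝒴 : Multiset Y) (l γh : Fin n → ℝ)
    (hZl : Summable fun x : X => Real.exp (wdot l ν x) * p0 x)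
    (hZgh : Summable fun x : X => Real.exp (wdot (γh + l) ν x) * p0 x)
    (hpos : ∀ y ∈ 𝒴, 0 < pLLY Yf p0 ν l y)
    (hmax : ∀ γ : Fin n → ℝ, Aaux Yf p0 ν 𝒴 γ l ≤ Aaux Yf p0 ν 𝒴 γh l)
    (hksum : ∀ y ∈ 𝒴, Summable fun x : {x : X // Yf x = y} =>
      (pLL p0 ν l x.1 / pLLY Yf p0 ν l y) * wdot γh ν x.1)
    (hpsum : Summable fun x : X => pLL p0 ν l x *
      ∑ i, ((ν i x : ℝ) / (nuSharp ν x : ℝ)) * Real.exp (γh i * (nuSharp ν x : ℝ))) :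
    LL Yf p0 ν 𝒴 l ≤ LL Yf p0 ν 𝒴 (γh + l) := by
  classical
  -- X is nonempty
  have hXne : Nonempty X := by
    by_contra h
    rw [not_nonempty_iff] at h
    rw [tsum_empty] at hp0sum; norm_num at hp0sum
  obtain ⟨x0⟩ := hXne
  set Zl := Zpart p0 ν l with hZldef
  set Zg := Zpart p0 ν (γh + l) with hZgdef
  have hterm : ∀ (l' : Fin n → ℝ) (x : X), 0 < Real.exp (wdot l' ν x) * p0 x :=
    fun l' x => mul_pos (Real.exp_pos _) (hp0 x)
  have hZlpos : 0 < Zl := Summable.tsum_pos hZl (fun x => (hterm l x).le) x0 (hterm l x0)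
  have hZgpos : 0 < Zg := Summable.tsum_pos hZgh (fun x => (hterm _ x).le) x0 (hterm _ x0)
  have hwadd : ∀ x, wdot (γh + l) ν x = wdot γh ν x + wdot l ν x := by
    intro x; simp [wdot, add_mul, Finset.sum_add_distrib]
  have hpLLlpos : ∀ x, 0 < pLL p0 ν l x := fun x =>
    mul_pos (mul_pos (inv_pos.2 hZlpos) (Real.exp_pos _)) (hp0 x)
  have hpLLgpos : ∀ x, 0 < pLL p0 ν (γh + l) x := fun x =>
    mul_pos (mul_pos (inv_pos.2 hZgpos) (Real.exp_pos _)) (hp0 x)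
  have hZl_eq : (∑' x : X, Real.exp (wdot l ν x) * p0 x) = Zl := rfl
  have hZg_eq : (∑' x : X, Real.exp (wdot (γh + l) ν x) * p0 x) = Zg := rfl
  have hpLLlsum : Summable (pLL p0 ν l) := by
    have h := hZl.mul_left Zl⁻¹
    have h2 : Summable fun x : X => pLL p0 ν l x := by
      simpa [pLL, mul_assoc, hZldef] using h
    exact h2
  have hpLLgsum : Summable (pLL p0 ν (γh + l)) := by
    have h := hZgh.mul_left Zg⁻¹
    have h2 : Summable fun x : X => pLL p0 ν (γh + l) x := by
      simpa [pLL, mul_assoc, hZgdef] using h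
    exact h2
  -- total mass of pLL l is 1
  have hpLLl_tsum : ∑' x : X, pLL p0 ν l x = 1 := by
    have : ∀ x : X, pLL p0 ν l x = Zl⁻¹ * (Real.exp (wdot l ν x) * p0 x) := by
      intro x; simp [pLL, hZldef, mul_assoc]
    rw [tsum_congr this, tsum_mul_left, hZl_eq, inv_mul_cancel₀ hZlpos.ne']
  -- Zg / Zl = p_λ[e^{γ·ν}]
  have hZratio : ∑' x : X, pLL p0 ν l x * Real.exp (wdot γh ν x) = Zg / Zl := by
    have h : ∀ x : X, pLL p0 ν l x * Real.exp (wdot γh ν x)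
        = Zl⁻¹ * (Real.exp (wdot (γh + l) ν x) * p0 x) := by
      intro x; simp only [pLL, hwadd, Real.exp_add]; ring
    rw [tsum_congr h, tsum_mul_left, hZg_eq, inv_mul_eq_div]
  have hexp_sum : Summable fun x : X => pLL p0 ν l x * Real.exp (wdot γh ν x) := by
    have h : ∀ x : X, pLL p0 ν l x * Real.exp (wdot γh ν x)
        = Zl⁻¹ * (Real.exp (wdot (γh + l) ν x) * p0 x) := by
      intro x; simp only [pLL, hwadd, Real.exp_add]; ring
    exact (funext h : _) ▸ (hZgh.mul_left Zl⁻¹)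
  -- pointwise Jensen: e^{γ·ν(x)} ≤ ∑ i, ν̄_i e^{γ_i ν_#}
  have hjensen : ∀ x : X, Real.exp (wdot γh ν x)
      ≤ ∑ i, ((ν i x : ℝ) / (nuSharp ν x : ℝ)) * Real.exp (γh i * (nuSharp ν x : ℝ)) := by
    intro x
    have hνpos : (0 : ℝ) < (nuSharp ν x : ℝ) := by exact_mod_cast hν x
    have hw0 : ∀ i ∈ Finset.univ, (0 : ℝ) ≤ (ν i x : ℝ) / (nuSharp ν x : ℝ) :=
      fun i _ => div_nonneg (Nat.cast_nonneg _) hνpos.le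
    have hw1 : ∑ i : Fin n, (ν i x : ℝ) / (nuSharp ν x : ℝ) = 1 := by
      rw [← Finset.sum_div]
      rw [show ∑ i : Fin n, ((ν i x : ℝ)) = (nuSharp ν x : ℝ) by
        rw [nuSharp]; push_cast; ring]
      exact div_self hνpos.ne'
    have := convexOn_exp.map_sum_le hw0 hw1 (fun i _ => Set.mem_univ _)
      (p := fun i => γh i * (nuSharp ν x : ℝ))
    have harg : ∑ i : Fin n, ((ν i x : ℝ) / (nuSharp ν x : ℝ)) • (γh i * (nuSharp ν x : ℝ))
        = wdot γh ν x := by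
      rw [wdot]
      refine Finset.sum_congr rfl fun i _ => ?_
      rw [smul_eq_mul]
      field_simp
    rw [harg] at this
    simpa [smul_eq_mul] using this
  -- log(Zg/Zl) ≤ pExp[g] - 1
  have hZbound : Real.log Zg - Real.log Zl ≤
      pExp p0 ν l (fun x =>
        ∑ i, ((ν i x : ℝ) / (nuSharp ν x : ℝ)) * Real.exp (γh i * (nuSharp ν x : ℝ))) - 1 := by
    have h1 : Real.log (Zg / Zl) ≤ Zg / Zl - 1 :=
      Real.log_le_sub_one_of_pos (div_pos hZgpos hZlpos)
    have h2 : Zg / Zl ≤ pExp p0 ν l (fun x =>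
        ∑ i, ((ν i x : ℝ) / (nuSharp ν x : ℝ)) * Real.exp (γh i * (nuSharp ν x : ℝ))) := by
      rw [← hZratio, pExp]
      exact Summable.tsum_le_tsum (fun x => mul_le_mul_of_nonneg_left (hjensen x) (hpLLlpos x).le)
        hexp_sum hpsum
    rw [Real.log_div hZgpos.ne' hZlpos.ne'] at h1
    linarith
  -- per-observation bound
  have hper : ∀ y ∈ 𝒴,
      1 + kExp Yf p0 ν l y (fun x => wdot γh ν x)
        - pExp p0 ν l (fun x =>
            ∑ i, ((ν i x : ℝ) / (nuSharp ν x : ℝ)) * Real.exp (γh i * (nuSharp ν x : ℝ)))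
      ≤ Real.log (pLLY Yf p0 ν (γh + l) y) - Real.log (pLLY Yf p0 ν l y) := by
    intro y hy
    have hpy : 0 < pLLY Yf p0 ν l y := hpos y hy
    set ι := {x : X // Yf x = y}
    have hιne : Nonempty ι := by
      by_contra h
      rw [not_nonempty_iff] at h
      rw [pLLY, tsum_empty] at hpy; norm_num at hpy
    obtain ⟨z0⟩ := hιne
    set w : ι → ℝ := fun x => pLL p0 ν l x.1 / pLLY Yf p0 ν l y with hwdef
    set r : ι → ℝ := fun x => pLL p0 ν (γh + l) x.1 / pLL p0 ν l x.1 with hrdef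
    have hwpos : ∀ x : ι, 0 < w x := fun x => div_pos (hpLLlpos x.1) hpy
    have hrpos : ∀ x : ι, 0 < r x := fun x => div_pos (hpLLgpos x.1) (hpLLlpos x.1)
    have hlsub : Summable fun x : ι => pLL p0 ν l x.1 :=
      hpLLlsum.comp_injective Subtype.val_injective
    have hgsub : Summable fun x : ι => pLL p0 ν (γh + l) x.1 :=
      hpLLgsum.comp_injective Subtype.val_injective
    have hwsum : Summable w := hlsub.div_const _
    have hw1 : ∑' x : ι, w x = 1 := by
      rw [hwdef]
      simp only [tsum_div_const]
      rw [show ∑' x : ι, pLL p0 ν l x.1 = pLLY Yf p0 ν l y from rfl]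
      exact div_self hpy.ne'
    have hwr_eq : ∀ x : ι, w x * r x = pLL p0 ν (γh + l) x.1 / pLLY Yf p0 ν l y := by
      intro x
      have ha := (hpLLlpos x.1).ne'
      have hc := hpy.ne'
      rw [hwdef, hrdef]
      field_simp
    have hwr : Summable fun x : ι => w x * r x := by
      rw [show (fun x : ι => w x * r x) = fun x : ι => pLL p0 ν (γh + l) x.1 / pLLY Yf p0 ν l y
        from funext hwr_eq]
      exact hgsub.div_const _
    have hwrsum : ∑' x : ι, w x * r x = pLLY Yf p0 ν (γh + l) y / pLLY Yf p0 ν l y := by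
      rw [tsum_congr hwr_eq, tsum_div_const]
      rfl
    have hpy' : 0 < pLLY Yf p0 ν (γh + l) y :=
      Summable.tsum_pos hgsub (fun x => (hpLLgpos x.1).le) z0 (hpLLgpos z0.1)
    have hr_eq : ∀ x : ι, r x = Real.exp (wdot γh ν x.1) * (Zl / Zg) := by
      intro x
      rw [hrdef]
      simp only [pLL, hwadd, Real.exp_add, hZldef, hZgdef]
      have := (hp0 x.1).ne'
      field_simp
    have hlogr : ∀ x : ι, w x * Real.log (r x)
        = w x * wdot γh ν x.1 + w x * Real.log (Zl / Zg) := by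
      intro x
      rw [hr_eq x, Real.log_mul (Real.exp_pos _).ne' (div_pos hZlpos hZgpos).ne',
        Real.log_exp]
      ring
    have hwlr : Summable fun x : ι => w x * Real.log (r x) := by
      rw [show (fun x : ι => w x * Real.log (r x))
          = fun x : ι => w x * wdot γh ν x.1 + w x * Real.log (Zl / Zg) from funext hlogr]
      exact (hksum y hy).add (hwsum.mul_right _)
    have hgibbs := gibbs_aux w r hwpos hrpos hwsum hw1 hwr hwlr
    have hlhs : ∑' x : ι, w x * Real.log (r x)
        = kExp Yf p0 ν l y (fun x => wdot γh ν x) + Real.log (Zl / Zg) := by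
      rw [tsum_congr hlogr, Summable.tsum_add (hksum y hy) (hwsum.mul_right _), tsum_mul_right, hw1,
        one_mul]
      rfl
    rw [hlhs, hwrsum, Real.log_div hpy'.ne' hpy.ne',
      Real.log_div hZlpos.ne' hZgpos.ne'] at hgibbs
    linarith [hZbound]
  -- A(γ̂,λ) ≥ 0 since A(0,λ) = 0
  have hA0 : Aaux Yf p0 ν 𝒴 0 l = 0 := by
    rw [Aaux]
    have hterm0 : ∀ y : Y,
        1 + kExp Yf p0 ν l y (fun x => wdot 0 ν x)
          - pExp p0 ν l (fun x =>
              ∑ i, ((ν i x : ℝ) / (nuSharp ν x : ℝ))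
                * Real.exp ((0 : Fin n → ℝ) i * (nuSharp ν x : ℝ))) = 0 := by
      intro y
      have h1 : kExp Yf p0 ν l y (fun x => wdot 0 ν x) = 0 := by
        simp [kExp, wdot]
      have h2 : pExp p0 ν l (fun x =>
          ∑ i, ((ν i x : ℝ) / (nuSharp ν x : ℝ))
            * Real.exp ((0 : Fin n → ℝ) i * (nuSharp ν x : ℝ))) = 1 := by
        have hg : ∀ x : X, (∑ i, ((ν i x : ℝ) / (nuSharp ν x : ℝ))
            * Real.exp ((0 : Fin n → ℝ) i * (nuSharp ν x : ℝ))) = 1 := by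
          intro x
          have hνpos : (0 : ℝ) < (nuSharp ν x : ℝ) := by exact_mod_cast hν x
          simp only [Pi.zero_apply, zero_mul, Real.exp_zero, mul_one]
          rw [← Finset.sum_div]
          rw [show ∑ i : Fin n, ((ν i x : ℝ)) = (nuSharp ν x : ℝ) by
            rw [nuSharp]; push_cast; ring]
          exact div_self hνpos.ne'
        rw [pExp, tsum_congr (fun x => by rw [hg x, mul_one]), hpLLl_tsum]
      rw [h1, h2]; ring
    rw [show (fun y => 1 + kExp Yf p0 ν l y (fun x => wdot 0 ν x)
        - pExp p0 ν l (fun x =>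
            ∑ i, ((ν i x : ℝ) / (nuSharp ν x : ℝ))
              * Real.exp ((0 : Fin n → ℝ) i * (nuSharp ν x : ℝ)))) = fun _ : Y => (0:ℝ)
      from funext hterm0]
    simp
  have hAge : 0 ≤ Aaux Yf p0 ν 𝒴 γh l := hA0 ▸ hmax 0
  -- conclude
  have hsum := Multiset.sum_map_le_sum_map _ _ hper
  rw [show Aaux Yf p0 ν 𝒴 γh l = (𝒴.map fun y =>
      1 + kExp Yf p0 ν l y (fun x => wdot γh ν x)
        - pExp p0 ν l (fun x =>
            ∑ i, ((ν i x : ℝ) / (nuSharp ν x : ℝ))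
              * Real.exp (γh i * (nuSharp ν x : ℝ)))).sum from rfl] at hAge
  have hfin : (𝒴.map fun y => Real.log (pLLY Yf p0 ν (γh + l) y)
      - Real.log (pLLY Yf p0 ν l y)).sum
      = LL Yf p0 ν 𝒴 (γh + l) - LL Yf p0 ν 𝒴 l := by
    rw [LL, LL, Multiset.sum_map_sub]
  linarith [le_trans hAge (hfin ▸ hsum)]
end

section
/- Under the stated setup, fix λ ∈ ℝ^n with Z_λ finite and a candidate property function c : X → ℕ with c(x) > 0 for some x ∈ X, and define the approximate gain G_c(α, λ) = ∑_{y∈𝒴} (1 + k_λ[α c] − p_λ[e^{α c}]) for α ∈ ℝ. Then α ↦ G_c(α, λ) is strictly concave, and α̂ ∈ ℝ is a global maximizer of G_c(·, λ) if and only if it satisfies ∑_{y∈𝒴} k_λ[c] = ∑_{y∈𝒴} p_λ[c e^{α̂ c}]; moreover such a maximizer, if it exists, is unique. -/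
/- Common setup: log-linear models over proof trees (complete data X) and
   queries (incomplete data Y). -/

variable {X Y : Type*}

/-- approximate gain `G_c(α,λ) = ∑_{y∈𝒴} (1 + k_λ[αc] − p_λ[e^{αc}])` of adding
a candidate property `c` with log-parameter `α`. -/
noncomputable def Gc (Yf : X → Y) (p0 : X → ℝ) {n : ℕ} (ν : Fin n → X → ℕ)
    (𝒴 : Multiset Y) (c : X → ℕ) (l : Fin n → ℝ) (α : ℝ) : ℝ :=
  (𝒴.map fun y =>
    1 + kExp Yf p0 ν l y (fun x => α * (c x : ℝ))
      - pExp p0 ν l (fun x => Real.exp (α * (c x : ℝ)))).sum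

/-- `G_c(·,λ)` is strictly concave; `α̂` is a global maximizer iff
`∑_y k_λ[c] = ∑_y p_λ[c e^{α̂ c}]`, and the maximizer (if it exists) is unique. -/
theorem gain_strictly_concave_and_stationarity
    {X Y : Type*} [Countable X] (Yf : X → Y)
    (p0 : X → ℝ) (hp0 : ∀ x, 0 < p0 x) (hp0sum : ∑' x : X, p0 x = 1)
    {n : ℕ} (ν : Fin n → X → ℕ) (hν : ∀ x, 1 ≤ nuSharp ν x)
    (𝒴 : Multiset Y) (h𝒴 : 𝒴 ≠ 0) (l : Fin n → ℝ)
    (hZl : Summable fun x : X => Real.exp (wdot l ν x) * p0 x)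
    (hpos : ∀ y ∈ 𝒴, 0 < pLLY Yf p0 ν l y)
    (c : X → ℕ) (hc : ∃ x : X, 0 < c x)
    (hksum : ∀ y ∈ 𝒴, Summable fun x : {x : X // Yf x = y} =>
      (pLL p0 ν l x.1 / pLLY Yf p0 ν l y) * (c x.1 : ℝ))
    (hpsum : ∀ α : ℝ, Summable fun x : X => pLL p0 ν l x * Real.exp (α * (c x : ℝ)))
    (hpcsum : ∀ α : ℝ, Summable fun x : X =>
      pLL p0 ν l x * ((c x : ℝ) * Real.exp (α * (c x : ℝ))))
    (hpd : ∀ α : ℝ,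
      HasDerivAt (fun a : ℝ => pExp p0 ν l (fun x => Real.exp (a * (c x : ℝ))))
        (pExp p0 ν l (fun x => (c x : ℝ) * Real.exp (α * (c x : ℝ)))) α) :
    StrictConcaveOn ℝ (Set.univ : Set ℝ) (Gc Yf p0 ν 𝒴 c l) ∧
    (∀ αh : ℝ,
      (∀ α : ℝ, Gc Yf p0 ν 𝒴 c l α ≤ Gc Yf p0 ν 𝒴 c l αh) ↔
      (𝒴.map fun y => kExp Yf p0 ν l y (fun x => (c x : ℝ))).sum =
      (𝒴.map fun _ => pExp p0 ν l
        (fun x => (c x : ℝ) * Real.exp (αh * (c x : ℝ)))).sum) ∧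
    (∀ α₁ α₂ : ℝ,
      (∀ α : ℝ, Gc Yf p0 ν 𝒴 c l α ≤ Gc Yf p0 ν 𝒴 c l α₁) →
      (∀ α : ℝ, Gc Yf p0 ν 𝒴 c l α ≤ Gc Yf p0 ν 𝒴 c l α₂) →
      α₁ = α₂) := by
  classical
  obtain ⟨x₀, hx₀⟩ := hc
  have hZpos : 0 < Zpart p0 ν l := by
    have hnn : ∀ x : X, 0 ≤ Real.exp (wdot l ν x) * p0 x := fun x =>
      le_of_lt (mul_pos (Real.exp_pos _) (hp0 x))
    exact Summable.tsum_pos hZl hnn x₀ (mul_pos (Real.exp_pos _) (hp0 x₀))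
  have hpLL : ∀ x, 0 < pLL p0 ν l x := fun x =>
    mul_pos (mul_pos (inv_pos.2 hZpos) (Real.exp_pos _)) (hp0 x)
  set m : ℝ := (Multiset.card 𝒴 : ℝ) with hm_def
  have hm : 0 < m := by
    have h0 : 0 < Multiset.card 𝒴 := Multiset.card_pos.2 h𝒴
    rw [hm_def]
    exact_mod_cast h0
  set S : ℝ := (𝒴.map fun y => kExp Yf p0 ν l y (fun x => (c x : ℝ))).sum with hS_def
  set E : ℝ → ℝ := fun a => pExp p0 ν l (fun x => Real.exp (a * (c x : ℝ))) with hE_def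
  set E' : ℝ → ℝ :=
    fun a => pExp p0 ν l (fun x => (c x : ℝ) * Real.exp (a * (c x : ℝ))) with hE'_def
  -- closed form of Gc
  have hG : ∀ α, Gc Yf p0 ν 𝒴 c l α = m + α * S - m * E α := by
    intro α
    have hk : ∀ y : Y, kExp Yf p0 ν l y (fun x => α * (c x : ℝ))
        = α * kExp Yf p0 ν l y (fun x => (c x : ℝ)) := by
      intro y
      unfold kExp
      rw [← tsum_mul_left]
      congr 1; funext x; ring
    unfold Gc
    have hmap : (𝒴.map fun y =>
        1 + kExp Yf p0 ν l y (fun x => α * (c x : ℝ))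
          - pExp p0 ν l (fun x => Real.exp (α * (c x : ℝ)))).sum
        = (𝒴.map fun y =>
            (1 - E α) + α * kExp Yf p0 ν l y (fun x => (c x : ℝ))).sum := by
      congr 1
      apply Multiset.map_congr rfl
      intro y _
      rw [hk y, hE_def]
      ring
    rw [hmap, Multiset.sum_map_add]
    have h1 : (𝒴.map fun _ => (1 - E α)).sum = m * (1 - E α) := by
      rw [Multiset.map_const', Multiset.sum_replicate, nsmul_eq_mul, hm_def]
    have h2 : (𝒴.map fun y => α * kExp Yf p0 ν l y (fun x => (c x : ℝ))).sum
        = α * S := by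
      rw [hS_def, ← Multiset.sum_map_mul_left]
    rw [h1, h2]
    ring
  -- tangent line inequality for E (convexity along the tangent)
  have hEtan : ∀ a b : ℝ, E b + (a - b) * E' b ≤ E a := by
    intro a b
    have hsum1 : Summable (fun x : X =>
        pLL p0 ν l x * Real.exp (b * (c x : ℝ))
          + (a - b) * (pLL p0 ν l x * ((c x : ℝ) * Real.exp (b * (c x : ℝ))))) :=
      (hpsum b).add ((hpcsum b).mul_left (a - b))
    have hle : ∀ x : X,
        pLL p0 ν l x * Real.exp (b * (c x : ℝ))
          + (a - b) * (pLL p0 ν l x * ((c x : ℝ) * Real.exp (b * (c x : ℝ))))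
        ≤ pLL p0 ν l x * Real.exp (a * (c x : ℝ)) := by
      intro x
      have h1 : (1 + (a - b) * (c x : ℝ)) * Real.exp (b * (c x : ℝ))
          ≤ Real.exp (a * (c x : ℝ)) := by
        have h2 := Real.add_one_le_exp ((a - b) * (c x : ℝ))
        calc (1 + (a - b) * (c x : ℝ)) * Real.exp (b * (c x : ℝ))
            ≤ Real.exp ((a - b) * (c x : ℝ)) * Real.exp (b * (c x : ℝ)) := by
              apply mul_le_mul_of_nonneg_right _ (Real.exp_pos _).le
              linarith
          _ = Real.exp (a * (c x : ℝ)) := by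
              rw [← Real.exp_add]; ring_nf
      calc pLL p0 ν l x * Real.exp (b * (c x : ℝ))
            + (a - b) * (pLL p0 ν l x * ((c x : ℝ) * Real.exp (b * (c x : ℝ))))
          = pLL p0 ν l x * ((1 + (a - b) * (c x : ℝ)) * Real.exp (b * (c x : ℝ))) := by
            ring
        _ ≤ pLL p0 ν l x * Real.exp (a * (c x : ℝ)) :=
            mul_le_mul_of_nonneg_left h1 (hpLL x).le
    have heq : E b + (a - b) * E' b
        = ∑' x : X, (pLL p0 ν l x * Real.exp (b * (c x : ℝ))
          + (a - b) * (pLL p0 ν l x * ((c x : ℝ) * Real.exp (b * (c x : ℝ))))) := by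
      rw [Summable.tsum_add (hpsum b) ((hpcsum b).mul_left (a - b)), tsum_mul_left]
      rfl
    rw [heq]
    exact Summable.tsum_le_tsum hle hsum1 (hpsum a)
  -- strict convexity of E
  have hEstrict : StrictConvexOn ℝ (Set.univ : Set ℝ) E := by
    refine ⟨convex_univ, ?_⟩
    intro x _ y _ hxy a b ha hb hab
    simp only [smul_eq_mul]
    have hle : ∀ z : X,
        pLL p0 ν l z * Real.exp ((a * x + b * y) * (c z : ℝ))
        ≤ a * (pLL p0 ν l z * Real.exp (x * (c z : ℝ)))
          + b * (pLL p0 ν l z * Real.exp (y * (c z : ℝ))) := by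
      intro z
      have h1 : Real.exp (a * (x * (c z : ℝ)) + b * (y * (c z : ℝ)))
          ≤ a * Real.exp (x * (c z : ℝ)) + b * Real.exp (y * (c z : ℝ)) := by
        have := convexOn_exp.2 (Set.mem_univ (x * (c z : ℝ)))
          (Set.mem_univ (y * (c z : ℝ))) ha.le hb.le hab
        simpa using this
      have h2 : (a * x + b * y) * (c z : ℝ)
          = a * (x * (c z : ℝ)) + b * (y * (c z : ℝ)) := by ring
      rw [h2]
      calc pLL p0 ν l z * Real.exp (a * (x * (c z : ℝ)) + b * (y * (c z : ℝ)))
          ≤ pLL p0 ν l z * (a * Real.exp (x * (c z : ℝ))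
              + b * Real.exp (y * (c z : ℝ))) :=
            mul_le_mul_of_nonneg_left h1 (hpLL z).le
        _ = a * (pLL p0 ν l z * Real.exp (x * (c z : ℝ)))
              + b * (pLL p0 ν l z * Real.exp (y * (c z : ℝ))) := by ring
    have hlt : pLL p0 ν l x₀ * Real.exp ((a * x + b * y) * (c x₀ : ℝ))
        < a * (pLL p0 ν l x₀ * Real.exp (x * (c x₀ : ℝ)))
          + b * (pLL p0 ν l x₀ * Real.exp (y * (c x₀ : ℝ))) := by
      have hcne : (c x₀ : ℝ) ≠ 0 := by positivity
      have hne : x * (c x₀ : ℝ) ≠ y * (c x₀ : ℝ) := by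
        intro h; exact hxy (mul_right_cancel₀ hcne h)
      have h1 : Real.exp (a * (x * (c x₀ : ℝ)) + b * (y * (c x₀ : ℝ)))
          < a * Real.exp (x * (c x₀ : ℝ)) + b * Real.exp (y * (c x₀ : ℝ)) := by
        have := strictConvexOn_exp.2 (Set.mem_univ (x * (c x₀ : ℝ)))
          (Set.mem_univ (y * (c x₀ : ℝ))) hne ha hb hab
        simpa using this
      have h2 : (a * x + b * y) * (c x₀ : ℝ)
          = a * (x * (c x₀ : ℝ)) + b * (y * (c x₀ : ℝ)) := by ring
      rw [h2]
      calc pLL p0 ν l x₀ * Real.exp (a * (x * (c x₀ : ℝ)) + b * (y * (c x₀ : ℝ)))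
          < pLL p0 ν l x₀ * (a * Real.exp (x * (c x₀ : ℝ))
              + b * Real.exp (y * (c x₀ : ℝ))) :=
            (mul_lt_mul_iff_right₀ (hpLL x₀)).2 h1
        _ = a * (pLL p0 ν l x₀ * Real.exp (x * (c x₀ : ℝ)))
              + b * (pLL p0 ν l x₀ * Real.exp (y * (c x₀ : ℝ))) := by ring
    have hsum2 : Summable (fun z : X =>
        a * (pLL p0 ν l z * Real.exp (x * (c z : ℝ)))
          + b * (pLL p0 ν l z * Real.exp (y * (c z : ℝ)))) :=
      ((hpsum x).mul_left a).add ((hpsum y).mul_left b)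
    have hkey : E (a * x + b * y) < a * E x + b * E y := by
      have h3 : a * E x + b * E y
          = ∑' z : X, (a * (pLL p0 ν l z * Real.exp (x * (c z : ℝ)))
              + b * (pLL p0 ν l z * Real.exp (y * (c z : ℝ)))) := by
        rw [Summable.tsum_add ((hpsum x).mul_left a) ((hpsum y).mul_left b),
          tsum_mul_left, tsum_mul_left]
        rfl
      rw [h3]
      exact Summable.tsum_lt_tsum hle hlt (hpsum (a * x + b * y)) hsum2
    exact hkey
  -- strict concavity of Gc
  have hsc : StrictConcaveOn ℝ (Set.univ : Set ℝ) (Gc Yf p0 ν 𝒴 c l) := by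
    refine ⟨convex_univ, ?_⟩
    intro x _ y _ hxy a b ha hb hab
    simp only [smul_eq_mul]
    rw [hG, hG, hG]
    have hE1 : E (a * x + b * y) < a * E x + b * E y :=
      hEstrict.2 (Set.mem_univ x) (Set.mem_univ y) hxy ha hb hab
    have hE2 : m * E (a * x + b * y) < m * (a * E x + b * E y) :=
      (mul_lt_mul_iff_right₀ hm).2 hE1
    have habm : a * m + b * m = m := by rw [← add_mul, hab, one_mul]
    nlinarith [hE2, habm]
  refine ⟨hsc, ?_, ?_⟩
  · -- stationarity characterization
    intro αh
    have hrhs : (𝒴.map fun _ => pExp p0 ν l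
        (fun x => (c x : ℝ) * Real.exp (αh * (c x : ℝ)))).sum = m * E' αh := by
      rw [Multiset.map_const', Multiset.sum_replicate, nsmul_eq_mul, hm_def]
    rw [hrhs]
    constructor
    · intro hmax
      have hloc : IsLocalMax (Gc Yf p0 ν 𝒴 c l) αh :=
        Filter.Eventually.of_forall hmax
      have hd : HasDerivAt (Gc Yf p0 ν 𝒴 c l) (S - m * E' αh) αh := by
        have hd0 : HasDerivAt (fun a : ℝ => m + a * S - m * E a)
            (S - m * E' αh) αh := by
          have h1 : HasDerivAt (fun a : ℝ => m + a * S) S αh := by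
            simpa using ((hasDerivAt_id αh).mul_const S).const_add m
          have h2 : HasDerivAt (fun a : ℝ => m * E a) (m * E' αh) αh :=
            (hpd αh).const_mul m
          exact h1.sub h2
        exact hd0.congr_of_eventuallyEq
          (Filter.Eventually.of_forall fun a => hG a)
      have hzero := hloc.hasDerivAt_eq_zero hd
      linarith
    · intro hstat α
      rw [hG, hG]
      have htan := hEtan α αh
      have h2 : m * (E αh + (α - αh) * E' αh) ≤ m * E α :=
        mul_le_mul_of_nonneg_left htan hm.le
      rw [hstat]
      ring_nf at h2 ⊢
      nlinarith [h2]
  · -- uniqueness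
    intro α₁ α₂ h1 h2
    by_contra hne
    have heq : Gc Yf p0 ν 𝒴 c l α₁ = Gc Yf p0 ν 𝒴 c l α₂ :=
      le_antisymm (h2 α₁) (h1 α₂)
    have hmid := hsc.2 (Set.mem_univ α₁) (Set.mem_univ α₂) hne
      (by norm_num : (0:ℝ) < 1/2) (by norm_num : (0:ℝ) < 1/2) (by norm_num)
    simp only [smul_eq_mul] at hmid
    have := h1 ((1/2 : ℝ) * α₁ + (1/2 : ℝ) * α₂)
    linarith
end
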